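/- Let Φ be a reduced irreducible root system with Weyl group W, highest root θ, simple roots (α_i)_{i∈S}. Fix J ⊆ S and let ρ∨_{S−J} be the coweight with ⟨ρ∨_{S−J}, α_i⟩ = 1 for i ∉ J and 0 for i ∈ J. Let M ≥ 1, let λ be a dominant coweight with ⟨λ, α_i⟩ ≥ M(⟨ρ∨,θ⟩ + 2) for all i ∉ J and ⟨λ, α_i⟩ = 0 for i ∈ J, and let z ∈ W. Then for every positive root α not in the span of {α_j : j ∈ J}, one has ⟨λ − Mρ∨_{S−J} + z(Mρ∨_{S−J}), α⟩ ≥ M. -/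
import Mathlib


open scoped Classical

/-- A datum packaging a reduced crystallographic root system, its Weyl group `W`,
a choice of positive roots, simple roots indexed by `S`, simple reflections, and
the Coxeter length function (characterized by counting inversions). -/
structure WeylDatum (S V W : Type*) [Fintype S] [AddCommGroup V] [Module ℝ V] [Group W] where
  /-- the action of `W` on the ambient space of the roots -/
  act : W →* V ≃ₗ[ℝ] V
  /-- the simple roots -/
  simple : S → V
  /-- the simple coroots, viewed as linear functionals -/
  coroot : S → Module.Dual ℝ V
  /-- the simple reflections -/
  refl : S → W
  /-- the positive roots -/
  pos : Set V
  /-- the set of all roots -/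
  roots : Set V
  /-- the length function of `W` -/
  len : W → ℕ
  pos_subset : pos ⊆ roots
  roots_eq : roots = pos ∪ ((fun a => -a) '' pos)
  pos_neg_disj : ∀ a ∈ pos, -a ∉ pos
  reduced : ∀ a ∈ roots, (2 : ℝ) • a ∉ roots
  simple_mem_pos : ∀ i, simple i ∈ pos
  coroot_self : ∀ i, coroot i (simple i) = 2
  act_refl : ∀ i x, act (refl i) x = x - coroot i x • simple i
  act_roots : ∀ w, ∀ a ∈ roots, act w a ∈ roots
  gen : Subgroup.closure (Set.range refl) = ⊤
  pos_finite : pos.Finite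
  crys : ∀ a ∈ pos, ∃ c : S → ℕ, a = ∑ i, (c i : ℝ) • simple i
  len_eq : ∀ w, len w = Nat.card {a : V // a ∈ pos ∧ act w a ∉ pos}

namespace WeylDatum

variable {S V W : Type*} [Fintype S] [AddCommGroup V] [Module ℝ V] [Group W]
variable (d : WeylDatum S V W)

/-- The action of `W` on coweights (linear functionals): `(w • χ) α = χ (w⁻¹ α)`. -/
def dualAct (w : W) (χ : Module.Dual ℝ V) : Module.Dual ℝ V :=
  χ ∘ₗ (d.act w⁻¹).toLinearMap

/-- A coweight is dominant if it pairs nonnegatively with every simple root. -/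
def Dominant (χ : Module.Dual ℝ V) : Prop := ∀ i, 0 ≤ χ (d.simple i)

/-- `I(χ) = {i ∈ S : ⟨χ, αᵢ⟩ = 0}`. -/
def ISet (χ : Module.Dual ℝ V) : Set S := {i | χ (d.simple i) = 0}

/-- The standard parabolic subgroup `W_K` generated by the simple reflections in `K`. -/
def parab (K : Set S) : Subgroup W := Subgroup.closure (d.refl '' K)

/-- `w` is of minimal length in the coset `w W_K`; i.e. `w ∈ W^K`. -/
def IsMinCoset (w : W) (K : Set S) : Prop := ∀ u ∈ d.parab K, d.len w ≤ d.len (w * u)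

end WeylDatum

/-- For `J ⊆ S`, `ρ∨_{S−J}` the coweight pairing to `1` with `αᵢ` for `i ∉ J` and
`0` for `i ∈ J`, `M ≥ 1`, `λ` dominant with `⟨λ, αᵢ⟩ ≥ M(⟨ρ∨, θ⟩ + 2)` for `i ∉ J` and
`⟨λ, αᵢ⟩ = 0` for `i ∈ J`, `z ∈ W`, and every positive root `α` not in the span of
`{α_j : j ∈ J}`, one has `⟨λ − Mρ∨_{S−J} + z(Mρ∨_{S−J}), α⟩ ≥ M`. -/
theorem statement9 {S V W : Type*} [Fintype S] [AddCommGroup V] [Module ℝ V] [Group W]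
    [Finite W] (d : WeylDatum S V W) (J : Set S)
    (ρ : Module.Dual ℝ V) (hρ : ∀ i, ρ (d.simple i) = 1)
    (ρJ : Module.Dual ℝ V)
    (hρJ : ∀ i, (i ∉ J → ρJ (d.simple i) = 1) ∧ (i ∈ J → ρJ (d.simple i) = 0))
    (θ : V) (hθ : θ ∈ d.pos)
    (hhigh : ∀ a ∈ d.roots, ∃ c : S → ℝ, (∀ i, 0 ≤ c i) ∧ θ - a = ∑ i, c i • d.simple i)
    (M : ℝ) (hM : 1 ≤ M)
    (lam : Module.Dual ℝ V) (hdom : d.Dominant lam)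
    (hlam : ∀ i, (i ∉ J → M * (ρ θ + 2) ≤ lam (d.simple i)) ∧ (i ∈ J → lam (d.simple i) = 0))
    (z : W) (α : V) (hα : α ∈ d.pos)
    (hspan : α ∉ Submodule.span ℝ (d.simple '' J)) :
    M ≤ lam α - M * ρJ α + M * d.dualAct z ρJ α := by
  classical
  obtain ⟨c, hc⟩ := d.crys α hα
  -- evaluation of functionals on α
  have hev : ∀ χ : Module.Dual ℝ V, χ α = ∑ i, (c i : ℝ) * χ (d.simple i) := by
    intro χ
    rw [hc, map_sum]
    simp [smul_eq_mul]
  -- some i0 ∉ J with c i0 ≠ 0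
  have hi0 : ∃ i, i ∉ J ∧ c i ≠ 0 := by
    by_contra h
    push_neg at h
    apply hspan
    rw [hc]
    apply Submodule.sum_mem
    intro i _
    by_cases hiJ : i ∈ J
    · exact Submodule.smul_mem _ _ (Submodule.subset_span ⟨i, hiJ, rfl⟩)
    · simp [h i hiJ]
  obtain ⟨i0, hi0J, hi0c⟩ := hi0
  -- for any positive root γ: 0 ≤ ρJ γ, ρJ γ ≤ ρ γ, ρ γ ≤ ρ θ
  have hposbounds : ∀ γ ∈ d.pos, 0 ≤ ρJ γ ∧ ρJ γ ≤ ρ γ ∧ ρ γ ≤ ρ θ := by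
    intro γ hγ
    obtain ⟨b, hb⟩ := d.crys γ hγ
    have hevγ : ∀ χ : Module.Dual ℝ V, χ γ = ∑ i, (b i : ℝ) * χ (d.simple i) := by
      intro χ
      rw [hb, map_sum]
      simp [smul_eq_mul]
    refine ⟨?_, ?_, ?_⟩
    · rw [hevγ ρJ]
      apply Finset.sum_nonneg
      intro i _
      by_cases hiJ : i ∈ J
      · simp [(hρJ i).2 hiJ]
      · simp [(hρJ i).1 hiJ]
    · rw [hevγ ρJ, hevγ ρ]
      apply Finset.sum_le_sum
      intro i _
      by_cases hiJ : i ∈ J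
      · simp [(hρJ i).2 hiJ, hρ i]
      · simp [(hρJ i).1 hiJ, hρ i]
    · obtain ⟨e, he0, he⟩ := hhigh γ (d.pos_subset hγ)
      have : ρ θ - ρ γ = ∑ i, e i := by
        rw [← map_sub, he, map_sum]
        simp [smul_eq_mul, hρ]
      have h2 : 0 ≤ ρ θ - ρ γ := by
        rw [this]
        exact Finset.sum_nonneg fun i _ => he0 i
      linarith
  have hρθ : 0 ≤ ρ θ := by
    have h := hposbounds θ hθ
    linarith [h.1, h.2.1, h.2.2]
  -- for any root β : -ρθ ≤ ρJ β
  have hroot : ∀ β ∈ d.roots, -ρ θ ≤ ρJ β := by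
    intro β hβ
    rw [d.roots_eq] at hβ
    rcases hβ with hβ | ⟨γ, hγ, rfl⟩
    · linarith [(hposbounds β hβ).1]
    · have h := hposbounds γ hγ
      simp only [map_neg]
      linarith [h.2.1, h.2.2]
  -- ρJ α ≥ 1
  have ht1 : 1 ≤ ρJ α := by
    rw [hev ρJ]
    have h1 : (1 : ℝ) ≤ (c i0 : ℝ) * ρJ (d.simple i0) := by
      rw [(hρJ i0).1 hi0J, mul_one]
      exact_mod_cast Nat.one_le_iff_ne_zero.2 hi0c
    have h2 : ∀ i ∈ Finset.univ, 0 ≤ (c i : ℝ) * ρJ (d.simple i) := by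
      intro i _
      by_cases hiJ : i ∈ J
      · simp [(hρJ i).2 hiJ]
      · simp [(hρJ i).1 hiJ]
    calc (1:ℝ) ≤ (c i0 : ℝ) * ρJ (d.simple i0) := h1
      _ ≤ ∑ i, (c i : ℝ) * ρJ (d.simple i) :=
        Finset.single_le_sum h2 (Finset.mem_univ i0)
  -- lam α ≥ ρJ α * (M * (ρ θ + 2))
  have hlamα : ρJ α * (M * (ρ θ + 2)) ≤ lam α := by
    rw [hev ρJ, hev lam, Finset.sum_mul]
    apply Finset.sum_le_sum
    intro i _
    by_cases hiJ : i ∈ J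
    · simp [(hρJ i).2 hiJ, (hlam i).2 hiJ]
    · rw [(hρJ i).1 hiJ, mul_one]
      exact mul_le_mul_of_nonneg_left ((hlam i).1 hiJ) (Nat.cast_nonneg _)
  -- the twisted term
  have hαroot : d.act z⁻¹ α ∈ d.roots := d.act_roots z⁻¹ α (d.pos_subset hα)
  have hs : -ρ θ ≤ d.dualAct z ρJ α := hroot _ hαroot
  have hM0 : 0 < M := by linarith
  nlinarith [mul_nonneg (mul_nonneg hM0.le (sub_nonneg.2 ht1)) hρθ,
    mul_nonneg hM0.le (sub_nonneg.2 ht1)]
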